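/- Let Ω ⊆ R^n be a bounded Lipschitz domain and E₀ ⊆ C Ω a given set with J_Ω(E₀ considered as a set with empty intersection with Ω) finite. Then there exists a measurable set E with E ∩ C Ω = E₀ such that J_Ω(E) = inf { J_Ω(F) : F ∩ C Ω = E₀ }. -/

import Mathlib

open MeasureTheory Metric Filter Set

/-- Interaction energy `L(A,B) = ∫∫ χ_A(x) χ_B(y) |x-y|^{-(n+s)} dx dy`, valued in `[0,∞]`. -/
noncomputable def interactionL (n : ℕ) (s : ℝ)
    (A B : Set (EuclideanSpace ℝ (Fin n))) : ENNReal :=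
  ∫⁻ x in A, ∫⁻ y in B, ENNReal.ofReal (1 / ‖x - y‖ ^ ((n : ℝ) + s))

/-- `J_Ω(E) = L(E ∩ Ω, C E) + L(E \ Ω, C E ∩ Ω)`. -/
noncomputable def Jfun (n : ℕ) (s : ℝ) (Ω E : Set (EuclideanSpace ℝ (Fin n))) : ENNReal :=
  interactionL n s (E ∩ Ω) Eᶜ + interactionL n s (E \ Ω) (Eᶜ ∩ Ω)

namespace ExMinAux

variable {n : ℕ} {s : ℝ}

/-- The kernel. -/
noncomputable def Kker (n : ℕ) (s : ℝ) (x y : EuclideanSpace ℝ (Fin n)) : ENNReal :=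
  ENNReal.ofReal (1 / ‖x - y‖ ^ ((n : ℝ) + s))

lemma measurable_Kker : Measurable (Function.uncurry (Kker n s)) := by
  unfold Kker Function.uncurry
  have h : Measurable fun p : EuclideanSpace ℝ (Fin n) × EuclideanSpace ℝ (Fin n) =>
      ‖p.1 - p.2‖ := (continuous_fst.sub continuous_snd).norm.measurable
  measurability

/-- Indicator with values in `ℝ≥0∞`. -/
noncomputable def ind (A : Set (EuclideanSpace ℝ (Fin n))) (x : EuclideanSpace ℝ (Fin n)) :
    ENNReal := A.indicator 1 x

lemma measurable_ind {A : Set (EuclideanSpace ℝ (Fin n))} (hA : MeasurableSet A) :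
    Measurable (ind A) := measurable_one.indicator hA

lemma ind_ne_top {A : Set (EuclideanSpace ℝ (Fin n))} {x} : ind A x ≠ ⊤ := by
  unfold ind Set.indicator; split <;> simp

/-- The combined coefficient of the kernel in `Jfun`. -/
noncomputable def coefJ (Ω F : Set (EuclideanSpace ℝ (Fin n))) (x y : EuclideanSpace ℝ (Fin n)) :
    ENNReal :=
  ind (F ∩ Ω) x * ind Fᶜ y + ind (F \ Ω) x * ind (Fᶜ ∩ Ω) y

lemma measurable_coefK {Ω F : Set (EuclideanSpace ℝ (Fin n))} (hΩ : MeasurableSet Ω)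
    (hF : MeasurableSet F) :
    Measurable fun p : EuclideanSpace ℝ (Fin n) × EuclideanSpace ℝ (Fin n) =>
      coefJ Ω F p.1 p.2 * Kker n s p.1 p.2 := by
  unfold coefJ
  exact ((((measurable_ind (hF.inter hΩ)).comp measurable_fst).mul
      ((measurable_ind hF.compl).comp measurable_snd)).add
    (((measurable_ind (hF.diff hΩ)).comp measurable_fst).mul
      ((measurable_ind (hF.compl.inter hΩ)).comp measurable_snd))).mul measurable_Kker

lemma measurable_coefK_inner {Ω F : Set (EuclideanSpace ℝ (Fin n))} (hΩ : MeasurableSet Ω)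
    (hF : MeasurableSet F) (x : EuclideanSpace ℝ (Fin n)) :
    Measurable fun y => coefJ Ω F x y * Kker n s x y :=
  Measurable.of_uncurry_left (f := fun x y => coefJ Ω F x y * Kker n s x y)
    (measurable_coefK hΩ hF)

lemma measurable_coefK_outer {Ω F : Set (EuclideanSpace ℝ (Fin n))} (hΩ : MeasurableSet Ω)
    (hF : MeasurableSet F) :
    Measurable fun x => ∫⁻ y, coefJ Ω F x y * Kker n s x y :=
  Measurable.lintegral_prod_right' (measurable_coefK hΩ hF)

lemma interactionL_eq {A B : Set (EuclideanSpace ℝ (Fin n))} (hA : MeasurableSet A)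
    (hB : MeasurableSet B) :
    interactionL n s A B = ∫⁻ x, ∫⁻ y, (ind A x * ind B y) * Kker n s x y := by
  unfold interactionL
  have inner : ∀ x, ∫⁻ y in B, ENNReal.ofReal (1 / ‖x - y‖ ^ ((n : ℝ) + s))
      = ∫⁻ y, ind B y * Kker n s x y := by
    intro x
    rw [← lintegral_indicator hB]
    refine lintegral_congr fun y => ?_
    by_cases hy : y ∈ B <;> simp [ind, Kker, Set.indicator_apply, hy]
  simp only [inner]
  rw [← lintegral_indicator hA]
  refine lintegral_congr fun x => ?_
  by_cases hx : x ∈ A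
  · rw [Set.indicator_of_mem hx]
    refine lintegral_congr fun y => ?_
    simp [ind, Set.indicator_of_mem hx]
  · rw [Set.indicator_of_notMem hx]
    symm
    simp [ind, Set.indicator_of_notMem hx]

lemma Jfun_eq {Ω F : Set (EuclideanSpace ℝ (Fin n))} (hΩ : MeasurableSet Ω)
    (hF : MeasurableSet F) :
    Jfun n s Ω F = ∫⁻ x, ∫⁻ y, coefJ Ω F x y * Kker n s x y := by
  unfold Jfun
  rw [interactionL_eq (hF.inter hΩ) hF.compl, interactionL_eq (hF.diff hΩ) (hF.compl.inter hΩ)]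
  have m1 : Measurable fun x => ∫⁻ y, (ind (F ∩ Ω) x * ind Fᶜ y) * Kker n s x y :=
    Measurable.lintegral_prod_right'
      ((((measurable_ind (hF.inter hΩ)).comp measurable_fst).mul
        ((measurable_ind hF.compl).comp measurable_snd)).mul measurable_Kker)
  rw [← lintegral_add_left m1]
  refine lintegral_congr fun x => ?_
  have m2 : Measurable fun y => (ind (F ∩ Ω) x * ind Fᶜ y) * Kker n s x y :=
    Measurable.of_uncurry_left (f := fun x y => (ind (F ∩ Ω) x * ind Fᶜ y) * Kker n s x y)
      ((((measurable_ind (hF.inter hΩ)).comp measurable_fst).mul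
        ((measurable_ind hF.compl).comp measurable_snd)).mul measurable_Kker)
  rw [← lintegral_add_left m2]
  refine lintegral_congr fun y => ?_
  unfold coefJ
  ring

lemma coefJ_congr {Ω F E : Set (EuclideanSpace ℝ (Fin n))} {x y : EuclideanSpace ℝ (Fin n)}
    (hx : x ∈ F ↔ x ∈ E) (hy : y ∈ F ↔ y ∈ E) :
    coefJ Ω F x y = coefJ Ω E x y := by
  unfold coefJ ind
  by_cases hxE : x ∈ E <;> by_cases hyE : y ∈ E <;> by_cases hxO : x ∈ Ω <;> by_cases hyO : y ∈ Ω <;>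
    simp_all [Set.indicator_apply, Set.mem_inter_iff, Set.mem_diff, Set.mem_compl_iff]

lemma coefJ_submod (Ω F G : Set (EuclideanSpace ℝ (Fin n))) (x y : EuclideanSpace ℝ (Fin n)) :
    coefJ Ω (F ∩ G) x y + coefJ Ω (F ∪ G) x y ≤ coefJ Ω F x y + coefJ Ω G x y := by
  unfold coefJ ind
  by_cases hxF : x ∈ F <;> by_cases hyF : y ∈ F <;> by_cases hxG : x ∈ G <;>
    by_cases hyG : y ∈ G <;> by_cases hxO : x ∈ Ω <;> by_cases hyO : y ∈ Ω <;>
    simp_all [Set.indicator_apply, Set.mem_inter_iff, Set.mem_diff, Set.mem_compl_iff,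
      Set.mem_union]

lemma J_submod {Ω F G : Set (EuclideanSpace ℝ (Fin n))} (hΩ : MeasurableSet Ω)
    (hF : MeasurableSet F) (hG : MeasurableSet G) :
    Jfun n s Ω (F ∩ G) + Jfun n s Ω (F ∪ G) ≤ Jfun n s Ω F + Jfun n s Ω G := by
  rw [Jfun_eq hΩ (hF.inter hG), Jfun_eq hΩ (hF.union hG), Jfun_eq hΩ hF, Jfun_eq hΩ hG]
  rw [← lintegral_add_left (measurable_coefK_outer hΩ (hF.inter hG)),
    ← lintegral_add_left (measurable_coefK_outer hΩ hF)]
  refine lintegral_mono fun x => ?_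
  rw [← lintegral_add_left (measurable_coefK_inner hΩ (hF.inter hG) x),
    ← lintegral_add_left (measurable_coefK_inner hΩ hF x)]
  refine lintegral_mono fun y => ?_
  rw [← add_mul, ← add_mul]
  exact mul_le_mul_left (coefJ_submod Ω F G x y) _

lemma J_lsc {Ω : Set (EuclideanSpace ℝ (Fin n))} (hΩ : MeasurableSet Ω)
    (F : ℕ → Set (EuclideanSpace ℝ (Fin n))) (hF : ∀ k, MeasurableSet (F k))
    {E : Set (EuclideanSpace ℝ (Fin n))} (hE : MeasurableSet E)
    (h : ∀ x, ∀ᶠ k in atTop, (x ∈ F k ↔ x ∈ E)) :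
    Jfun n s Ω E ≤ liminf (fun k => Jfun n s Ω (F k)) atTop := by
  rw [Jfun_eq hΩ hE]
  have hlim : ∀ x y, coefJ Ω E x y * Kker n s x y
      = liminf (fun k => coefJ Ω (F k) x y * Kker n s x y) atTop := by
    intro x y
    have hev : ∀ᶠ k in atTop, coefJ Ω (F k) x y * Kker n s x y
        = coefJ Ω E x y * Kker n s x y :=
      ((h x).and (h y)).mono fun k ⟨hx, hy⟩ => by rw [coefJ_congr hx hy]
    rw [liminf_congr hev, liminf_const]
  calc ∫⁻ x, ∫⁻ y, coefJ Ω E x y * Kker n s x y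
      ≤ ∫⁻ x, liminf (fun k => ∫⁻ y, coefJ Ω (F k) x y * Kker n s x y) atTop := by
        refine lintegral_mono fun x => ?_
        have := lintegral_liminf_le (μ := volume) (u := atTop)
          (f := fun k y => coefJ Ω (F k) x y * Kker n s x y)
          (fun k => measurable_coefK_inner hΩ (hF k) x)
        refine le_trans (le_of_eq ?_) this
        exact lintegral_congr fun y => hlim x y
    _ ≤ liminf (fun k => ∫⁻ x, ∫⁻ y, coefJ Ω (F k) x y * Kker n s x y) atTop :=
        lintegral_liminf_le (fun k => measurable_coefK_outer hΩ (hF k))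
    _ = liminf (fun k => Jfun n s Ω (F k)) atTop :=
        liminf_congr (Eventually.of_forall fun k => (Jfun_eq hΩ (hF k)).symm)

/-- `interFam F j k = F j ∩ F (j+1) ∩ ... ∩ F (j+k)`. -/
def interFam {α : Type*} (F : ℕ → Set α) (j : ℕ) : ℕ → Set α
  | 0 => F j
  | k + 1 => interFam F j k ∩ F (j + k + 1)

end ExMinAux


open ExMinAux in
/-- Existence of minimizers: given exterior data `E₀ ⊆ C Ω` with finite energy,
there is a set `E` agreeing with `E₀` outside `Ω` attaining the infimum of `J_Ω`. -/
theorem exists_minimizer (n : ℕ) (hn : 1 ≤ n) (s : ℝ) (hs : s ∈ Set.Ioo (0:ℝ) 1)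
    (Ω : Set (EuclideanSpace ℝ (Fin n))) (hΩo : IsOpen Ω) (hΩb : Bornology.IsBounded Ω)
    (E₀ : Set (EuclideanSpace ℝ (Fin n))) (hE₀ : MeasurableSet E₀) (hE₀Ω : E₀ ⊆ Ωᶜ)
    (hfin : Jfun n s Ω E₀ < ⊤) :
    ∃ E : Set (EuclideanSpace ℝ (Fin n)), MeasurableSet E ∧ E ∩ Ωᶜ = E₀ ∧
      Jfun n s Ω E =
        ⨅ (F : Set (EuclideanSpace ℝ (Fin n))) (_ : MeasurableSet F ∧ F ∩ Ωᶜ = E₀),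
          Jfun n s Ω F := by
  classical
  have hΩm : MeasurableSet Ω := hΩo.measurableSet
  set m := ⨅ (F : Set (EuclideanSpace ℝ (Fin n))) (_ : MeasurableSet F ∧ F ∩ Ωᶜ = E₀),
      Jfun n s Ω F with hm
  have hmle : m ≤ Jfun n s Ω E₀ := iInf₂_le E₀ ⟨hE₀, Set.inter_eq_left.mpr hE₀Ω⟩
  have hmtop : m ≠ ⊤ := (lt_of_le_of_lt hmle hfin).ne
  -- a minimizing sequence
  have key : ∀ k : ℕ, ∃ F, (MeasurableSet F ∧ F ∩ Ωᶜ = E₀) ∧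
      Jfun n s Ω F ≤ m + 2⁻¹ ^ k := by
    intro k
    have h2 : ((2 : ENNReal)⁻¹) ^ k ≠ 0 := pow_ne_zero k (by norm_num)
    have hlt : m < m + 2⁻¹ ^ k := ENNReal.lt_add_right hmtop h2
    rw [hm] at hlt
    obtain ⟨F, hF⟩ := iInf_lt_iff.mp hlt
    obtain ⟨hFadm, hFJ⟩ := iInf_lt_iff.mp hF
    rw [← hm] at hFJ
    exact ⟨F, hFadm, hFJ.le⟩
  choose F hFprop hFJ using key
  have hFm : ∀ k, MeasurableSet (F k) := fun k => (hFprop k).1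
  have hFadm : ∀ k, F k ∩ Ωᶜ = E₀ := fun k => (hFprop k).2
  set g := ExMinAux.interFam F with hg
  have hgsucc : ∀ j k, g j (k + 1) = g j k ∩ F (j + k + 1) := fun j k => rfl
  have hgm : ∀ j k, MeasurableSet (g j k) := by
    intro j k
    induction k with
    | zero => exact hFm j
    | succ k ih => exact ih.inter (hFm _)
  have hgadm : ∀ j k, g j k ∩ Ωᶜ = E₀ := by
    intro j k
    induction k with
    | zero => exact hFadm j
    | succ k ih =>
      rw [hgsucc]
      have : g j k ∩ F (j + k + 1) ∩ Ωᶜ = (g j k ∩ Ωᶜ) ∩ (F (j + k + 1) ∩ Ωᶜ) := by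
        ext x; simp [Set.mem_inter_iff]; tauto
      rw [this, ih, hFadm, Set.inter_self]
  have hganti : ∀ j, Antitone (g j) := fun j =>
    antitone_nat_of_succ_le fun k => Set.inter_subset_left
  have hpowsum : ∀ N : ℕ, ((2:ENNReal)⁻¹) ^ (N + 1) + 2⁻¹ ^ (N + 1) = 2⁻¹ ^ N := by
    intro N
    rw [pow_succ, ← mul_add]
    have : (2:ENNReal)⁻¹ + 2⁻¹ = 1 := ENNReal.inv_two_add_inv_two
    rw [this, mul_one]
  -- energy bound along the intersection family
  have hgJ : ∀ j k, Jfun n s Ω (g j k) + 2⁻¹ ^ (j + k) ≤ m + 2 * 2⁻¹ ^ j := by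
    intro j k
    induction k with
    | zero =>
      calc Jfun n s Ω (g j 0) + 2⁻¹ ^ (j + 0)
          ≤ (m + 2⁻¹ ^ j) + 2⁻¹ ^ j := by
            exact add_le_add_left (hFJ j) ((2:ENNReal)⁻¹ ^ j)
        _ = m + 2 * 2⁻¹ ^ j := by ring
    | succ k ih =>
      have hsub := ExMinAux.J_submod (n := n) (s := s) hΩm (hgm j k) (hFm (j + k + 1))
      have hadmU : (g j k ∪ F (j + k + 1)) ∩ Ωᶜ = E₀ := by
        rw [Set.union_inter_distrib_right, hgadm, hFadm, Set.union_self]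
      have hmU : m ≤ Jfun n s Ω (g j k ∪ F (j + k + 1)) :=
        iInf₂_le _ ⟨(hgm j k).union (hFm _), hadmU⟩
      have h1 : Jfun n s Ω (g j (k + 1)) + m
          ≤ Jfun n s Ω (g j k) + Jfun n s Ω (F (j + k + 1)) := by
        refine le_trans ?_ hsub
        rw [hgsucc]
        exact add_le_add_right hmU _
      have h2 : (Jfun n s Ω (g j (k + 1)) + 2⁻¹ ^ (j + (k + 1))) + m
          ≤ (m + 2 * 2⁻¹ ^ j) + m := by
        calc (Jfun n s Ω (g j (k + 1)) + 2⁻¹ ^ (j + (k + 1))) + m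
            = (Jfun n s Ω (g j (k + 1)) + m) + 2⁻¹ ^ (j + (k + 1)) := by ring
          _ ≤ (Jfun n s Ω (g j k) + Jfun n s Ω (F (j + k + 1))) + 2⁻¹ ^ (j + (k + 1)) :=
              add_le_add_left h1 _
          _ ≤ (Jfun n s Ω (g j k) + (m + 2⁻¹ ^ (j + k + 1))) + 2⁻¹ ^ (j + (k + 1)) := by
              gcongr
              exact hFJ _
          _ = (Jfun n s Ω (g j k) + (2⁻¹ ^ (j + k + 1) + 2⁻¹ ^ (j + k + 1))) + m := by
              have : j + (k + 1) = j + k + 1 := by omega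
              rw [this]; ring
          _ = (Jfun n s Ω (g j k) + 2⁻¹ ^ (j + k)) + m := by rw [hpowsum]
          _ ≤ (m + 2 * 2⁻¹ ^ j) + m := add_le_add_left ih _
      exact (ENNReal.add_le_add_iff_right hmtop).mp h2
  -- pass to the limit in k
  set Ej : ℕ → Set (EuclideanSpace ℝ (Fin n)) := fun j => ⋂ k, g j k with hEj
  have hEjm : ∀ j, MeasurableSet (Ej j) := fun j => MeasurableSet.iInter fun k => hgm j k
  have hEjadm : ∀ j, Ej j ∩ Ωᶜ = E₀ := by
    intro j
    have step : Ej j ∩ Ωᶜ = ⋂ k, (g j k ∩ Ωᶜ) := by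
      ext x
      simp only [hEj, Set.mem_inter_iff, Set.mem_iInter, Set.mem_compl_iff]
      constructor
      · rintro ⟨h1, h2⟩ k; exact ⟨h1 k, h2⟩
      · intro h; exact ⟨fun k => (h k).1, (h 0).2⟩
    rw [step]
    simp only [hgadm, Set.iInter_const]
  have hEjJ : ∀ j, Jfun n s Ω (Ej j) ≤ m + 2 * 2⁻¹ ^ j := by
    intro j
    have hev : ∀ x, ∀ᶠ k in atTop, (x ∈ g j k ↔ x ∈ Ej j) := by
      intro x
      by_cases hx : x ∈ Ej j
      · exact Eventually.of_forall fun k => iff_of_true (Set.mem_iInter.mp hx k) hx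
      · obtain ⟨k0, hk0⟩ : ∃ k, x ∉ g j k := by
          simpa [hEj, Set.mem_iInter] using hx
        refine eventually_atTop.mpr ⟨k0, fun k hk => iff_of_false (fun hxk => ?_) hx⟩
        exact hk0 (hganti j hk hxk)
    refine (ExMinAux.J_lsc hΩm (g j) (hgm j) (hEjm j) hev).trans ?_
    calc liminf (fun k => Jfun n s Ω (g j k)) atTop
        ≤ liminf (fun _ : ℕ => m + 2 * 2⁻¹ ^ j) atTop := by
          refine liminf_le_liminf (Eventually.of_forall fun k => ?_)
          exact le_trans le_self_add (hgJ j k)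
      _ = m + 2 * 2⁻¹ ^ j := liminf_const _
  -- the increasing union
  have hshift : ∀ j k, g j (k + 1) ⊆ g (j + 1) k := by
    intro j k
    induction k with
    | zero =>
      intro x hx
      exact hx.2
    | succ k ih =>
      intro x hx
      refine ⟨ih hx.1, ?_⟩
      have e : j + 1 + k + 1 = j + (k + 1) + 1 := by omega
      rw [e]
      exact hx.2
  have hEmono : Monotone Ej := by
    refine monotone_nat_of_le_succ fun j x hx => ?_
    rw [Set.mem_iInter]
    intro k
    exact hshift j k (Set.mem_iInter.mp hx (k + 1))
  set E : Set (EuclideanSpace ℝ (Fin n)) := ⋃ j, Ej j with hE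
  have hEm : MeasurableSet E := MeasurableSet.iUnion hEjm
  have hEadm : E ∩ Ωᶜ = E₀ := by
    have step : E ∩ Ωᶜ = ⋃ j, (Ej j ∩ Ωᶜ) := by
      ext x
      simp only [hE, Set.mem_inter_iff, Set.mem_iUnion, Set.mem_compl_iff]
      constructor
      · rintro ⟨⟨j, hj⟩, h2⟩; exact ⟨j, hj, h2⟩
      · rintro ⟨j, hj, h2⟩; exact ⟨⟨j, hj⟩, h2⟩
    rw [step]
    simp only [hEjadm, Set.iUnion_const]
  have hevE : ∀ x, ∀ᶠ j in atTop, (x ∈ Ej j ↔ x ∈ E) := by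
    intro x
    by_cases hx : x ∈ E
    · obtain ⟨j0, hj0⟩ : ∃ j, x ∈ Ej j := by simpa [hE, Set.mem_iUnion] using hx
      refine eventually_atTop.mpr ⟨j0, fun j hj => iff_of_true (hEmono hj hj0) hx⟩
    · refine Eventually.of_forall fun j => iff_of_false (fun hxj => hx ?_) hx
      exact Set.mem_iUnion.mpr ⟨j, hxj⟩
  have hlsc := ExMinAux.J_lsc (n := n) (s := s) hΩm Ej hEjm hEm hevE
  have htend : Tendsto (fun j : ℕ => m + 2 * 2⁻¹ ^ j) atTop (nhds m) := by
    have h0 : Tendsto (fun j : ℕ => ((2:ENNReal)⁻¹) ^ j) atTop (nhds 0) :=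
      ENNReal.tendsto_pow_atTop_nhds_zero_of_lt_one (by norm_num)
    have h1 : Tendsto (fun j : ℕ => 2 * ((2:ENNReal)⁻¹) ^ j) atTop (nhds (2 * 0)) :=
      ENNReal.Tendsto.const_mul h0 (Or.inr (by norm_num))
    have h2 : Tendsto (fun j : ℕ => m + 2 * ((2:ENNReal)⁻¹) ^ j) atTop (nhds (m + 2 * 0)) :=
      Tendsto.add tendsto_const_nhds h1
    simpa using h2
  have hliminfE : liminf (fun j => m + 2 * 2⁻¹ ^ j) atTop = m := htend.liminf_eq
  have hle : Jfun n s Ω E ≤ m := by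
    refine hlsc.trans ?_
    calc liminf (fun j => Jfun n s Ω (Ej j)) atTop
        ≤ liminf (fun j => m + 2 * 2⁻¹ ^ j) atTop :=
          liminf_le_liminf (Eventually.of_forall hEjJ)
      _ = m := hliminfE
  have hge : m ≤ Jfun n s Ω E := iInf₂_le E ⟨hEm, hEadm⟩
  exact ⟨E, hEm, hEadm, le_antisymm hle hge⟩
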